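/- Let κ > 0 and take ρ = −(κ+4)/2. On {(x,y) ∈ ℝ² : x > y} define Λ(x,y) = ((κ−4)(κ−2)(κ+4)/(2κ²))·[ (x−y)^{(3κ−4)/(2κ)} log(x−y) + (x−y)^{−(κ+4)/(2κ)}·(4κ x² − (4κ+κ²) y²)/16 ]. Then A_{κ;−(κ+4)/2} Λ = 0 identically on this domain. -/

import Mathlib

set_option maxHeartbeats 1600000


/-- Logarithmic partner of the grade-two singular vector over the SLE_κ(ρ=-(κ+4)/2)
partition function. -/
noncomputable def Λ10 (κ x y : ℝ) : ℝ :=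
  (κ - 4) * (κ - 2) * (κ + 4) / (2 * κ ^ 2) *
    ((x - y) ^ ((3 * κ - 4) / (2 * κ)) * Real.log (x - y)
      + (x - y) ^ (-(κ + 4) / (2 * κ))
          * (4 * κ * x ^ 2 - (4 * κ + κ ^ 2) * y ^ 2) / 16)

/-- explicit x-derivative of Λ10 -/
noncomputable def DX10 (κ x y : ℝ) : ℝ :=
  (κ - 4) * (κ - 2) * (κ + 4) / (2 * κ ^ 2) *
    ((3 * κ - 4) / (2 * κ) * (x - y) ^ ((3 * κ - 4) / (2 * κ) - 1) * Real.log (x - y)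
      + (x - y) ^ ((3 * κ - 4) / (2 * κ) - 1)
      + (-(κ + 4) / (2 * κ) * (x - y) ^ (-(κ + 4) / (2 * κ) - 1)
            * (4 * κ * x ^ 2 - (4 * κ + κ ^ 2) * y ^ 2)
          + (x - y) ^ (-(κ + 4) / (2 * κ)) * (8 * κ * x)) / 16)

/-- explicit second x-derivative -/
noncomputable def DXX10 (κ x y : ℝ) : ℝ :=
  (κ - 4) * (κ - 2) * (κ + 4) / (2 * κ ^ 2) *
    ((3 * κ - 4) / (2 * κ) * (((3 * κ - 4) / (2 * κ) - 1) * (x - y) ^ ((3 * κ - 4) / (2 * κ) - 2))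
        * Real.log (x - y)
      + ((3 * κ - 4) / (2 * κ) + ((3 * κ - 4) / (2 * κ) - 1)) * (x - y) ^ ((3 * κ - 4) / (2 * κ) - 2)
      + (-(κ + 4) / (2 * κ) * ((-(κ + 4) / (2 * κ) - 1) * (x - y) ^ (-(κ + 4) / (2 * κ) - 2))
            * (4 * κ * x ^ 2 - (4 * κ + κ ^ 2) * y ^ 2)
          + 2 * (-(κ + 4) / (2 * κ)) * (x - y) ^ (-(κ + 4) / (2 * κ) - 1) * (8 * κ * x)
          + (x - y) ^ (-(κ + 4) / (2 * κ)) * (8 * κ)) / 16)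

/-- explicit y-derivative of Λ10 -/
noncomputable def DY10 (κ x y : ℝ) : ℝ :=
  (κ - 4) * (κ - 2) * (κ + 4) / (2 * κ ^ 2) *
    (-((3 * κ - 4) / (2 * κ)) * (x - y) ^ ((3 * κ - 4) / (2 * κ) - 1) * Real.log (x - y)
      - (x - y) ^ ((3 * κ - 4) / (2 * κ) - 1)
      + (-(-(κ + 4) / (2 * κ)) * (x - y) ^ (-(κ + 4) / (2 * κ) - 1)
            * (4 * κ * x ^ 2 - (4 * κ + κ ^ 2) * y ^ 2)
          + (x - y) ^ (-(κ + 4) / (2 * κ)) * (-(2 * (4 * κ + κ ^ 2)) * y)) / 16)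

lemma hd_pow {y x : ℝ} (h : y < x) (p : ℝ) :
    HasDerivAt (fun x' => (x' - y) ^ p) (p * (x - y) ^ (p - 1)) x := by
  have h1 : HasDerivAt (fun x' : ℝ => x' - y) 1 x := (hasDerivAt_id x).sub_const y
  simpa using h1.rpow_const (Or.inl (sub_ne_zero.mpr h.ne'))

lemma hd_pow_y {y x : ℝ} (h : y < x) (p : ℝ) :
    HasDerivAt (fun y' => (x - y') ^ p) (-(p * (x - y) ^ (p - 1))) y := by
  have h1 : HasDerivAt (fun y' : ℝ => x - y') (-1) y := (hasDerivAt_id y).const_sub x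
  have := h1.rpow_const (p := p) (Or.inl (sub_ne_zero.mpr h.ne'))
  convert this using 1; ring

lemma hd_log {y x : ℝ} (h : y < x) :
    HasDerivAt (fun x' => Real.log (x' - y)) (1 / (x - y)) x := by
  have h1 : HasDerivAt (fun x' : ℝ => x' - y) 1 x := (hasDerivAt_id x).sub_const y
  exact h1.log (sub_ne_zero.mpr h.ne')

lemma hd_log_y {y x : ℝ} (h : y < x) :
    HasDerivAt (fun y' => Real.log (x - y')) (-1 / (x - y)) y := by
  have h1 : HasDerivAt (fun y' : ℝ => x - y') (-1) y := (hasDerivAt_id y).const_sub x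
  exact h1.log (sub_ne_zero.mpr h.ne')

lemma rpow_shift {t : ℝ} (ht : 0 < t) {E e : ℝ} (n : ℕ) (h : E = e + n) :
    t ^ E = t ^ e * t ^ n := by
  rw [h, Real.rpow_add ht, Real.rpow_natCast]

section shifts
variable {κ t : ℝ} (hκ : κ ≠ 0) (ht : 0 < t)
include hκ ht

lemma shift_a : t ^ ((3 * κ - 4) / (2 * κ)) = t ^ (-(κ + 4) / (2 * κ) - 2) * t ^ (4:ℕ) :=
  rpow_shift ht 4 (by push_cast; field_simp; ring)

lemma shift_a1 : t ^ ((3 * κ - 4) / (2 * κ) - 1) = t ^ (-(κ + 4) / (2 * κ) - 2) * t ^ (3:ℕ) :=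
  rpow_shift ht 3 (by push_cast; field_simp; ring)

lemma shift_a11 : t ^ ((3 * κ - 4) / (2 * κ) - 1 - 1) = t ^ (-(κ + 4) / (2 * κ) - 2) * t ^ (2:ℕ) :=
  rpow_shift ht 2 (by push_cast; field_simp; ring)

lemma shift_a2 : t ^ ((3 * κ - 4) / (2 * κ) - 2) = t ^ (-(κ + 4) / (2 * κ) - 2) * t ^ (2:ℕ) :=
  rpow_shift ht 2 (by push_cast; field_simp; ring)

lemma shift_b : t ^ (-(κ + 4) / (2 * κ)) = t ^ (-(κ + 4) / (2 * κ) - 2) * t ^ (2:ℕ) :=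
  rpow_shift ht 2 (by push_cast; ring)

lemma shift_b1 : t ^ (-(κ + 4) / (2 * κ) - 1) = t ^ (-(κ + 4) / (2 * κ) - 2) * t ^ (1:ℕ) :=
  rpow_shift ht 1 (by push_cast; ring)

lemma shift_b11 : t ^ (-(κ + 4) / (2 * κ) - 1 - 1) = t ^ (-(κ + 4) / (2 * κ) - 2) * t ^ (0:ℕ) :=
  rpow_shift ht 0 (by push_cast; ring)

lemma shift_b2 : t ^ (-(κ + 4) / (2 * κ) - 2) = t ^ (-(κ + 4) / (2 * κ) - 2) * t ^ (0:ℕ) :=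
  rpow_shift ht 0 (by push_cast; ring)

end shifts

lemma hasDerivAt_Λ10_x (κ : ℝ) (hκ : κ ≠ 0) {x y : ℝ} (h : y < x) :
    HasDerivAt (fun x' => Λ10 κ x' y) (DX10 κ x y) x := by
  have ht : (0:ℝ) < x - y := sub_pos.mpr h
  have hne : x - y ≠ 0 := ne_of_gt ht
  have hQ : HasDerivAt (fun x' : ℝ => 4 * κ * x' ^ 2 - (4 * κ + κ ^ 2) * y ^ 2)
      (8 * κ * x) x := by
    have := ((hasDerivAt_pow 2 x).const_mul (4 * κ)).sub_const ((4 * κ + κ ^ 2) * y ^ 2)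
    refine this.congr_deriv ?_; ring
  have H1 := (hd_pow h ((3 * κ - 4) / (2 * κ))).mul (hd_log h)
  have H2 := ((hd_pow h (-(κ + 4) / (2 * κ))).mul hQ).div_const 16
  have H := (H1.add H2).const_mul ((κ - 4) * (κ - 2) * (κ + 4) / (2 * κ ^ 2))
  refine H.congr_deriv ?_
  rw [DX10, shift_a hκ ht, shift_a1 hκ ht, shift_b hκ ht, shift_b1 hκ ht]
  field_simp

lemma hasDerivAt_DX10_x (κ : ℝ) (hκ : κ ≠ 0) {x y : ℝ} (h : y < x) :
    HasDerivAt (fun x' => DX10 κ x' y) (DXX10 κ x y) x := by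
  have ht : (0:ℝ) < x - y := sub_pos.mpr h
  have hne : x - y ≠ 0 := ne_of_gt ht
  have hQ : HasDerivAt (fun x' : ℝ => 4 * κ * x' ^ 2 - (4 * κ + κ ^ 2) * y ^ 2)
      (8 * κ * x) x := by
    have := ((hasDerivAt_pow 2 x).const_mul (4 * κ)).sub_const ((4 * κ + κ ^ 2) * y ^ 2)
    refine this.congr_deriv ?_; ring
  have hL : HasDerivAt (fun x' : ℝ => 8 * κ * x') (8 * κ) x := by
    simpa using (hasDerivAt_id x).const_mul (8 * κ)
  have H1 := ((hd_pow h ((3 * κ - 4) / (2 * κ) - 1)).const_mul ((3 * κ - 4) / (2 * κ))).mul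
      (hd_log h)
  have H2 := hd_pow h ((3 * κ - 4) / (2 * κ) - 1)
  have H3 := (((hd_pow h (-(κ + 4) / (2 * κ) - 1)).const_mul (-(κ + 4) / (2 * κ))).mul hQ)
  have H4 := (hd_pow h (-(κ + 4) / (2 * κ))).mul hL
  have H := ((H1.add H2).add ((H3.add H4).div_const 16)).const_mul
      ((κ - 4) * (κ - 2) * (κ + 4) / (2 * κ ^ 2))
  refine H.congr_deriv ?_
  rw [DXX10, shift_a1 hκ ht, shift_a11 hκ ht, shift_a2 hκ ht, shift_b hκ ht,
    shift_b1 hκ ht, shift_b11 hκ ht, shift_b2 hκ ht]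
  field_simp
  ring

lemma hasDerivAt_Λ10_y (κ : ℝ) (hκ : κ ≠ 0) {x y : ℝ} (h : y < x) :
    HasDerivAt (fun y' => Λ10 κ x y') (DY10 κ x y) y := by
  have ht : (0:ℝ) < x - y := sub_pos.mpr h
  have hne : x - y ≠ 0 := ne_of_gt ht
  have hQ : HasDerivAt (fun y' : ℝ => 4 * κ * x ^ 2 - (4 * κ + κ ^ 2) * y' ^ 2)
      (-(2 * (4 * κ + κ ^ 2)) * y) y := by
    have := ((hasDerivAt_pow 2 y).const_mul (4 * κ + κ ^ 2)).const_sub (4 * κ * x ^ 2)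
    refine this.congr_deriv ?_; ring
  have H1 := (hd_pow_y h ((3 * κ - 4) / (2 * κ))).mul (hd_log_y h)
  have H2 := ((hd_pow_y h (-(κ + 4) / (2 * κ))).mul hQ).div_const 16
  have H := (H1.add H2).const_mul ((κ - 4) * (κ - 2) * (κ + 4) / (2 * κ ^ 2))
  refine H.congr_deriv ?_
  rw [DY10, shift_a hκ ht, shift_a1 hκ ht, shift_b hκ ht, shift_b1 hκ ht]
  field_simp
  ring

/-- For `ρ = -(κ+4)/2`, `A_{κ;ρ} Λ = 0` identically on `{x > y}`. -/
theorem stmt_10 (κ : ℝ) (hκ : 0 < κ) (ρ : ℝ) (hρ : ρ = -(κ + 4) / 2) :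
    ∀ x y : ℝ, y < x →
      κ / 2 * deriv (fun x' => deriv (fun x'' => Λ10 κ x'' y) x') x
        + 2 / (y - x) * deriv (fun y' => Λ10 κ x y') y
        - ρ * (ρ + 4 - κ) / (2 * κ) / (y - x) ^ 2 * Λ10 κ x y = 0 := by
  intro x y hxy
  subst hρ
  have hk : κ ≠ 0 := ne_of_gt hκ
  have ht : (0:ℝ) < x - y := sub_pos.mpr hxy
  have hne : x - y ≠ 0 := ne_of_gt ht
  have h2 : deriv (fun x' => deriv (fun x'' => Λ10 κ x'' y) x') x = DXX10 κ x y := by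
    have hEq : (fun x' => deriv (fun x'' => Λ10 κ x'' y) x') =ᶠ[nhds x]
        (fun x' => DX10 κ x' y) := by
      filter_upwards [eventually_gt_nhds hxy] with x' hx'
      exact (hasDerivAt_Λ10_x κ hk hx').deriv
    rw [hEq.deriv_eq]
    exact (hasDerivAt_DX10_x κ hk hxy).deriv
  have hy : deriv (fun y' => Λ10 κ x y') y = DY10 κ x y :=
    (hasDerivAt_Λ10_y κ hk hxy).deriv
  rw [h2, hy]
  rw [Λ10, DXX10, DY10, shift_a hk ht, shift_a2 hk ht, shift_a1 hk ht,
    shift_b hk ht, shift_b1 hk ht, shift_b2 hk ht]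
  clear h2 hy hne
  obtain ⟨u, rfl⟩ : ∃ u, x = u + y := ⟨x - y, by ring⟩
  have hu : (0:ℝ) < u := by linarith [ht]
  have hu' : u ≠ 0 := ne_of_gt hu
  simp only [add_sub_cancel_right]
  rw [show y - (u + y) = -u by ring]
  generalize Real.log u = L
  generalize u ^ (-(κ + 4) / (2 * κ) - 2) = s
  field_simp
  ring
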